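/- Let Q be a finite p-group and let P be a finite p-group acting faithfully on a finite set Δ with ℓ orbits. Then the minimal number of generators of the wreath product Q wr_Δ P equals d(P) + ℓ · d(Q). -/

import Mathlib

/-- The action of `P` on the base group `Δ → Q` of the wreath product,
permuting coordinates: `(σ • f) δ = f (σ⁻¹ • δ)`. -/
def wreathMulAut (Q : Type*) (Δ : Type*) (P : Type*) [Group Q] [Group P] [MulAction P Δ] :
    P →* MulAut (Δ → Q) where
  toFun σ := MulEquiv.arrowCongr (MulAction.toPerm σ) (MulEquiv.refl Q)
  map_one' := by
    ext f δ
    simp [MulEquiv.arrowCongr]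
  map_mul' σ τ := by
    ext f δ
    simp [MulEquiv.arrowCongr, mul_smul]

/-- The wreath product `Q wr_Δ P`, with base group `Δ → Q` and top group `P`. -/
abbrev WreathProduct (Q Δ P : Type*) [Group Q] [Group P] [MulAction P Δ] :=
  SemidirectProduct (Δ → Q) P (wreathMulAut Q Δ P)

instance (Q Δ P : Type*) [Group Q] [Group P] [MulAction P Δ] [Finite Q] [Finite Δ]
    [Finite P] : Finite (WreathProduct Q Δ P) :=
  Finite.of_injective (fun w => (w.left, w.right)) fun a b h => by
    cases a; cases b
    simpa [SemidirectProduct.ext_iff, Prod.ext_iff] using h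



section Frat

open scoped commutatorElement

variable (p : ℕ) (G : Type*) [Group G]

/-- The subgroup generated by commutators and `p`-th powers. -/
def pFrat : Subgroup G :=
  commutator G ⊔ Subgroup.normalClosure {x | ∃ g : G, g ^ p = x}

instance pFrat_normal : (pFrat p G).Normal := Subgroup.sup_normal _ _

variable {G}

lemma pow_mem_pFrat (g : G) : g ^ p ∈ pFrat p G :=
  le_sup_right (α := Subgroup G) (Subgroup.subset_normalClosure ⟨g, rfl⟩)

lemma commutator_mem_pFrat (a b : G) : ⁅a, b⁆ ∈ pFrat p G :=
  le_sup_left (α := Subgroup G)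
    (Subgroup.commutator_mem_commutator (Subgroup.mem_top a) (Subgroup.mem_top b))

instance pFratQuot_commGroup : CommGroup (G ⧸ pFrat p G) :=
  { (inferInstance : Group (G ⧸ pFrat p G)) with
    mul_comm := by
      intro x y
      induction x using QuotientGroup.induction_on with
      | H a =>
      induction y using QuotientGroup.induction_on with
      | H b =>
      rw [← QuotientGroup.mk_mul, ← QuotientGroup.mk_mul, QuotientGroup.eq]
      convert commutator_mem_pFrat p b⁻¹ a⁻¹ using 1
      group }

lemma pFratQuot_pow_eq_one (x : G ⧸ pFrat p G) : x ^ p = 1 := by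
  induction x using QuotientGroup.induction_on with
  | H a =>
    rw [← QuotientGroup.mk_pow, QuotientGroup.eq_one_iff]
    exact pow_mem_pFrat p a

end Frat

section Lift

variable {G : Type*} [Group G]

/-- Lift a generating finset of a quotient to a finset of the group whose closure together
with the kernel is everything. -/
lemma exists_finset_closure_sup (N : Subgroup G) [N.Normal] (S : Finset (G ⧸ N))
    (hS : Subgroup.closure (S : Set (G ⧸ N)) = ⊤) :
    ∃ T : Finset G, T.card ≤ S.card ∧ Subgroup.closure (T : Set G) ⊔ N = ⊤ := by
  classical
  choose f hf using fun s : G ⧸ N => QuotientGroup.mk'_surjective N s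
  refine ⟨S.image f, Finset.card_image_le, ?_⟩
  have himg : (QuotientGroup.mk' N) '' ((S.image f : Finset G) : Set G) = (S : Set (G ⧸ N)) := by
    ext x
    simp only [Finset.coe_image, Set.image_image, Set.mem_image, Finset.mem_coe]
    constructor
    · rintro ⟨s, hs, rfl⟩; rw [hf]; exact hs
    · intro hx; exact ⟨x, hx, hf x⟩
  have hmap : Subgroup.map (QuotientGroup.mk' N)
      (Subgroup.closure ((S.image f : Finset G) : Set G)) = ⊤ := by
    rw [MonoidHom.map_closure, himg, hS]
  have := congrArg (Subgroup.comap (QuotientGroup.mk' N)) hmap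
  rwa [Subgroup.comap_map_eq, QuotientGroup.ker_mk', Subgroup.comap_top] at this

end Lift

section Coatom

open scoped commutatorElement

variable {p : ℕ} {G : Type*} [Group G]

lemma subgroup_eq_bot_or_top_of_coatom {M : Subgroup G} (hM : IsCoatom M) [M.Normal]
    (N : Subgroup (G ⧸ M)) : N = ⊥ ∨ N = ⊤ := by
  have hle : M ≤ Subgroup.comap (QuotientGroup.mk' M) N := by
    intro m hm
    simp only [Subgroup.mem_comap, QuotientGroup.mk'_apply]
    rw [QuotientGroup.eq_one_iff m |>.mpr hm]
    exact N.one_mem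
  have hmap : Subgroup.map (QuotientGroup.mk' M) (Subgroup.comap (QuotientGroup.mk' M) N) = N :=
    Subgroup.map_comap_eq_self_of_surjective (QuotientGroup.mk'_surjective M) N
  rcases eq_or_lt_of_le hle with h | h
  · left
    rw [← hmap, ← h, Subgroup.map_eq_bot_iff, QuotientGroup.ker_mk']
  · right
    rw [← hmap, hM.2 _ h, Subgroup.map_top_of_surjective _ (QuotientGroup.mk'_surjective M)]

lemma pFrat_le_coatom (hp : p.Prime) [Finite G] (hG : IsPGroup p G) {M : Subgroup G}
    (hM : IsCoatom M) : pFrat p G ≤ M := by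
  haveI : Fact p.Prime := ⟨hp⟩
  haveI hnil : Group.IsNilpotent G := hG.isNilpotent
  haveI hMnormal : M.Normal :=
    Subgroup.NormalizerCondition.normal_of_coatom M (normalizerCondition_of_isNilpotent (G := G)) hM
  -- the quotient G ⧸ M
  have hGm : IsPGroup p (G ⧸ M) := hG.to_quotient M
  have hnt : Nontrivial (G ⧸ M) := by
    obtain ⟨g, hg⟩ := not_forall.mp ((Subgroup.eq_top_iff' M).not.mp hM.1)
    exact ⟨⟨(g : G ⧸ M), 1, by
      rw [Ne, QuotientGroup.eq_one_iff]; exact hg⟩⟩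
  obtain ⟨x, hx⟩ := exists_ne (1 : G ⧸ M)
  have hxtop : Subgroup.zpowers x = ⊤ := by
    rcases subgroup_eq_bot_or_top_of_coatom hM (Subgroup.zpowers x) with h | h
    · exact absurd (Subgroup.zpowers_eq_bot.mp h) hx
    · exact h
  -- x^p = 1
  have hxp : x ^ p = 1 := by
    rcases subgroup_eq_bot_or_top_of_coatom hM (Subgroup.zpowers (x ^ p)) with h | h
    · exact Subgroup.zpowers_eq_bot.mp h
    · exfalso
      have hxmem : x ∈ Subgroup.zpowers (x ^ p) := h ▸ Subgroup.mem_top x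
      obtain ⟨m, hm0⟩ := hxmem
      have hm : (x ^ p) ^ m = x := hm0
      -- x = (x^p)^m, so x^(p*m-1) = 1
      have hx1 : x ^ ((p : ℤ) * m) = x := by
        rw [zpow_mul, zpow_natCast, hm]
      have hx2 : x ^ ((p : ℤ) * m - 1) = 1 := by
        rw [zpow_sub, hx1, zpow_one, mul_inv_cancel]
      have hdvd : (orderOf x : ℤ) ∣ (p : ℤ) * m - 1 := orderOf_dvd_iff_zpow_eq_one.mpr hx2
      obtain ⟨k, hk⟩ := (IsPGroup.iff_orderOf.mp hGm) x
      have hpord : p ∣ orderOf x := by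
        rcases Nat.eq_zero_or_pos k with rfl | hk0
        · exact absurd (orderOf_eq_one_iff.mp (by rw [hk, pow_zero])) hx
        · exact hk ▸ dvd_pow_self p hk0.ne'
      have h1 : (p : ℤ) ∣ (p : ℤ) * m - 1 := dvd_trans (Int.natCast_dvd_natCast.mpr hpord) hdvd
      have h2 : (p : ℤ) ∣ (p : ℤ) * m := Dvd.intro m rfl
      have h3 : (p : ℤ) ∣ 1 := by
        have := dvd_sub h2 h1
        simpa using this
      have h4 := Int.le_of_dvd one_pos h3
      have := hp.two_le
      omega
  -- all p-th powers and commutators lie in M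
  have hpowers : ∀ g : G, g ^ p ∈ M := by
    intro g
    rw [← QuotientGroup.eq_one_iff, QuotientGroup.mk_pow]
    obtain ⟨n, hn⟩ := hxtop ▸ Subgroup.mem_top ((g : G ⧸ M))
    rw [← hn, ← zpow_natCast, ← zpow_mul, mul_comm, zpow_mul, zpow_natCast, hxp, one_zpow]
  have hcomm : ∀ a b : G, ⁅a, b⁆ ∈ M := by
    intro a b
    rw [← QuotientGroup.eq_one_iff]
    have : ((⁅a, b⁆ : G) : G ⧸ M) = ⁅(a : G ⧸ M), (b : G ⧸ M)⁆ := by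
      simp [commutatorElement_def]
    rw [this, commutatorElement_eq_one_iff_commute]
    obtain ⟨n, hn⟩ := hxtop ▸ Subgroup.mem_top ((a : G ⧸ M))
    obtain ⟨m, hm⟩ := hxtop ▸ Subgroup.mem_top ((b : G ⧸ M))
    rw [← hn, ← hm]
    exact (Commute.refl x).zpow_zpow n m
  refine sup_le ?_ ?_
  · rw [commutator_def, Subgroup.commutator_le]
    exact fun a _ b _ => hcomm a b
  · refine Subgroup.normalClosure_le_normal ?_
    rintro y ⟨g, rfl⟩
    exact hpowers g

end Coatom
section Rank

universe u

variable {p : ℕ}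

lemma rank_eq_rank_pFratQuot (hp : p.Prime) {G : Type*} [Group G] [Finite G]
    (hG : IsPGroup p G) : Group.rank G = Group.rank (G ⧸ pFrat p G) := by
  refine le_antisymm ?_
    (Group.rank_le_of_surjective (QuotientGroup.mk' _) (QuotientGroup.mk'_surjective _))
  obtain ⟨S, hcard, hclS⟩ := Group.rank_spec (G ⧸ pFrat p G)
  obtain ⟨T, hT, hTsup⟩ := exists_finset_closure_sup _ S hclS
  have hclT : Subgroup.closure (T : Set G) = ⊤ := by
    by_contra h
    obtain ⟨M, hM, hle⟩ :=
      (IsCoatomic.eq_top_or_exists_le_coatom (Subgroup.closure (T : Set G))).resolve_left h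
    have : (⊤ : Subgroup G) ≤ M := hTsup ▸ sup_le hle (pFrat_le_coatom hp hG hM)
    exact hM.1 (top_le_iff.mp this)
  calc Group.rank G ≤ T.card := Group.rank_le hclT
    _ ≤ S.card := hT
    _ = _ := hcard

lemma rank_elem_le_aux (hp : p.Prime) :
    ∀ (n : ℕ) (V : Type u) [CommGroup V] [Finite V], (∀ x : V, x ^ p = 1) →
      Nat.card V ≤ n → Group.rank V ≤ (Nat.card V).factorization p := by
  intro n
  induction n with
  | zero =>
    intro V _ _ _ hle
    exact absurd hle (by have := Nat.card_pos (α := V); omega)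
  | succ n ih =>
    intro V _ _ hV hle
    rcases subsingleton_or_nontrivial V with hs | hnt
    · have h0 : Group.rank V ≤ (∅ : Finset V).card := by
        apply Group.rank_le
        rw [Finset.coe_empty, Subgroup.closure_empty]
        exact Subsingleton.elim _ _
      simpa using h0
    · haveI : Fact p.Prime := ⟨hp⟩
      obtain ⟨x, hx⟩ := exists_ne (1 : V)
      set N := Subgroup.zpowers x with hN
      have hordx : orderOf x = p := orderOf_eq_prime (hV x) hx
      have hcardN : Nat.card N = p := by rw [hN, Nat.card_zpowers, hordx]
      have hcardeq : Nat.card V = Nat.card (V ⧸ N) * p := by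
        rw [Subgroup.card_eq_card_quotient_mul_card_subgroup N, hcardN]
      have hVq : ∀ y : V ⧸ N, y ^ p = 1 := by
        intro y
        induction y using QuotientGroup.induction_on with
        | H a => rw [← QuotientGroup.mk_pow, hV a, QuotientGroup.mk_one]
      have hcardlt : Nat.card (V ⧸ N) ≤ n := by
        have h2 := hp.two_le
        have h1 := Nat.card_pos (α := V ⧸ N)
        nlinarith [hcardeq, hle]
      have ihq := ih (V ⧸ N) hVq hcardlt
      obtain ⟨S, hScard, hScl⟩ := Group.rank_spec (V ⧸ N)
      obtain ⟨T, hT, hTsup⟩ := exists_finset_closure_sup N S hScl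
      classical
      have hcl : Subgroup.closure ((insert x T : Finset V) : Set V) = ⊤ := by
        rw [Finset.coe_insert, Set.insert_eq, Subgroup.closure_union,
          ← Subgroup.zpowers_eq_closure, ← hN]
        rwa [sup_comm] at hTsup
      have hrk : Group.rank V ≤ T.card + 1 :=
        le_trans (Group.rank_le hcl) (Finset.card_insert_le x T)
      have hfact : (Nat.card V).factorization p = (Nat.card (V ⧸ N)).factorization p + 1 := by
        rw [hcardeq, Nat.factorization_mul (Nat.card_pos (α := V ⧸ N)).ne' hp.pos.ne',
          Finsupp.add_apply, Nat.Prime.factorization_self hp]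
      omega

lemma rank_elementary (hp : p.Prime) (V : Type u) [CommGroup V] [Finite V]
    (hV : ∀ x : V, x ^ p = 1) :
    Group.rank V = (Nat.card V).factorization p := by
  haveI : Fact p.Prime := ⟨hp⟩
  haveI : NeZero p := ⟨hp.pos.ne'⟩
  refine le_antisymm (rank_elem_le_aux hp (Nat.card V) V hV le_rfl) ?_
  -- lower bound: card V ≤ p ^ rank V
  obtain ⟨S, hScard, hScl⟩ := Group.rank_spec V
  classical
  let ψ : ∀ _ : S, Multiplicative (ZMod p) →* V := fun s =>
    { toFun := fun a => (s : V) ^ (Multiplicative.toAdd a).val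
      map_one' := by simp
      map_mul' := by
        intro a b
        show (s : V) ^ (Multiplicative.toAdd a + Multiplicative.toAdd b).val = _
        rw [ZMod.val_add, ← pow_eq_pow_mod _ (hV (s : V)), pow_add] }
  let φ : (S → Multiplicative (ZMod p)) →* V :=
    MonoidHom.noncommPiCoprod ψ (fun _ _ _ a b => Commute.all _ _)
  have hφsurj : Function.Surjective φ := by
    rw [← MonoidHom.range_eq_top]
    rw [eq_top_iff, ← hScl, Subgroup.closure_le]
    intro s hs
    refine ⟨Pi.mulSingle ⟨s, hs⟩ (Multiplicative.ofAdd 1), ?_⟩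
    erw [MonoidHom.noncommPiCoprod_mulSingle]
    show (s : V) ^ (1 : ZMod p).val = s
    rw [ZMod.val_one, pow_one]
  have hcardle : Nat.card V ≤ p ^ S.card := by
    have := Nat.card_le_card_of_surjective φ hφsurj
    rwa [Nat.card_fun, Nat.card_congr (Multiplicative.toAdd (α := ZMod p)), Nat.card_zmod,
      Nat.card_eq_finsetCard] at this
  have hpgroup : IsPGroup p V := fun g => ⟨1, by rw [pow_one]; exact hV g⟩
  obtain ⟨k, hk⟩ := IsPGroup.iff_card.mp hpgroup
  rw [hk, hp.factorization_pow, Finsupp.single_eq_same]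
  rw [hk] at hcardle
  rw [hScard] at hcardle
  exact (Nat.pow_le_pow_iff_right hp.one_lt).mp hcardle

lemma rank_eq_factorization (hp : p.Prime) {G : Type*} [Group G] [Finite G]
    (hG : IsPGroup p G) :
    Group.rank G = (Nat.card (G ⧸ pFrat p G)).factorization p := by
  rw [rank_eq_rank_pFratQuot hp hG]
  exact rank_elementary hp _ (pFratQuot_pow_eq_one p)

end Rank
section Main

open SemidirectProduct MulAction

theorem rank_wreathProduct (p : ℕ) (hp : p.Prime) (Q Δ P : Type*) [Group Q] [Group P]
    [Finite Q] [Finite Δ] [Finite P] [MulAction P Δ] [FaithfulSMul P Δ]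
    (hQ : IsPGroup p Q) (hP : IsPGroup p P) :
    Group.rank (WreathProduct Q Δ P) =
      Group.rank P + Nat.card (MulAction.orbitRel.Quotient P Δ) * Group.rank Q := by
  classical
  haveI : Fact p.Prime := ⟨hp⟩
  haveI : Fintype Δ := Fintype.ofFinite Δ
  set Ω := MulAction.orbitRel.Quotient P Δ with hΩ
  haveI : Fintype Ω := Fintype.ofFinite Ω
  -- basic facts about the action on the base group
  have haut : ∀ (σ : P) (f : Δ → Q) (δ : Δ), wreathMulAut Q Δ P σ f δ = f (σ⁻¹ • δ) := by
    intro σ f δ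
    rfl
  have hsingle : ∀ (σ : P) (δ : Δ) (q : Q),
      wreathMulAut Q Δ P σ (Pi.mulSingle δ q) = Pi.mulSingle (σ • δ) q := by
    intro σ δ q
    funext δ'
    rw [haut]
    by_cases h : δ' = σ • δ
    · subst h
      rw [Pi.mulSingle_apply, Pi.mulSingle_apply, if_pos rfl, if_pos (by rw [inv_smul_smul])]
    · rw [Pi.mulSingle_apply, Pi.mulSingle_apply, if_neg h, if_neg (by
        intro hc
        exact h (by rw [← hc, smul_inv_smul]))]
  have hmksmul : ∀ (σ : P) (δ : Δ), (Quotient.mk'' (σ • δ) : Ω) = Quotient.mk'' δ := by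
    intro σ δ
    exact Quotient.sound' ⟨σ, rfl⟩
  -- Upper bound
  obtain ⟨SP, hSPcard, hSPcl⟩ := Group.rank_spec P
  obtain ⟨SQ, hSQcard, hSQcl⟩ := Group.rank_spec Q
  have upper : Group.rank (WreathProduct Q Δ P) ≤ Group.rank P + Nat.card Ω * Group.rank Q := by
    set T : Finset (WreathProduct Q Δ P) := SP.image inr ∪
      (Finset.univ ×ˢ SQ).image
        (fun z : Ω × Q => inl (Pi.mulSingle z.1.out z.2)) with hT
    have hTcl : Subgroup.closure (T : Set (WreathProduct Q Δ P)) = ⊤ := by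
      set H := Subgroup.closure (T : Set (WreathProduct Q Δ P)) with hH
      have hinr : ∀ σ : P, inr σ ∈ H := by
        have : (⊤ : Subgroup P) ≤ Subgroup.comap (inr : P →* WreathProduct Q Δ P) H := by
          rw [← hSPcl, Subgroup.closure_le]
          intro σ hσ
          simp only [Subgroup.coe_comap, Set.mem_preimage, SetLike.mem_coe]
          exact Subgroup.subset_closure (by
            rw [hT]; exact Finset.mem_coe.mpr (Finset.mem_union_left _
              (Finset.mem_image_of_mem _ hσ)))
        intro σ
        exact this (Subgroup.mem_top σ)
      have hout : ∀ (ω : Ω) (q : Q), inl (Pi.mulSingle ω.out q) ∈ H := by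
        intro ω
        have : (⊤ : Subgroup Q) ≤ Subgroup.comap
            ((inl : (Δ → Q) →* WreathProduct Q Δ P).comp (MonoidHom.mulSingle (fun _ : Δ => Q) ω.out)) H := by
          rw [← hSQcl, Subgroup.closure_le]
          intro q hq
          simp only [Subgroup.coe_comap, Set.mem_preimage, SetLike.mem_coe, MonoidHom.coe_comp,
            Function.comp_apply, MonoidHom.mulSingle_apply]
          exact Subgroup.subset_closure (by
            rw [hT]
            exact Finset.mem_coe.mpr (Finset.mem_union_right _
              (Finset.mem_image.mpr ⟨(ω, q), Finset.mem_product.mpr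
                ⟨Finset.mem_univ ω, Finset.mem_coe.mp hq⟩, rfl⟩)))
        intro q
        exact this (Subgroup.mem_top q)
      have hall : ∀ (δ : Δ) (q : Q), inl (Pi.mulSingle δ q) ∈ H := by
        intro δ q
        have hrel := Quotient.exact' (Quotient.out_eq' (Quotient.mk'' δ : Ω))
        obtain ⟨σ, hσ⟩ : (Quotient.mk'' δ : Ω).out ∈ MulAction.orbit P δ := hrel
        have hδ : δ = σ⁻¹ • (Quotient.mk'' δ : Ω).out := by rw [← hσ, inv_smul_smul]
        have : (inl (Pi.mulSingle δ q) : WreathProduct Q Δ P) =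
            inr σ⁻¹ * inl (Pi.mulSingle ((Quotient.mk'' δ : Ω).out) q : Δ → Q) * inr (σ⁻¹)⁻¹ := by
          rw [← inl_aut, hsingle, ← hδ]
        rw [this]
        exact Subgroup.mul_mem _ (Subgroup.mul_mem _ (hinr σ⁻¹) (hout _ q)) (hinr (σ⁻¹)⁻¹)
      have hbase : ∀ f : Δ → Q, inl f ∈ H := by
        intro f
        have hkey : (MonoidHom.noncommPiCoprod
            (fun δ : Δ => MonoidHom.mulSingle (fun _ : Δ => Q) δ)
            (fun _ _ h x y => by exact Pi.mulSingle_commute (f := fun _ : Δ => Q) h x y)) = MonoidHom.id (Δ → Q) := by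
          apply MonoidHom.pi_ext
          intro δ q
          erw [MonoidHom.noncommPiCoprod_mulSingle, MonoidHom.id_apply]
        have hf : f = Finset.univ.noncommProd
            (fun δ : Δ => Pi.mulSingle δ (f δ))
            (fun a _ b _ h => by exact Pi.mulSingle_commute (f := fun _ : Δ => Q) h (f a) (f b)) := by
          conv_lhs => rw [← MonoidHom.id_apply _ f, ← hkey]
          rfl
        have hmem : f ∈ Subgroup.comap (inl : (Δ → Q) →* WreathProduct Q Δ P) H := by
          rw [hf]
          exact Subgroup.noncommProd_mem _ _ (fun δ _ => hall δ (f δ))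
        exact hmem
      rw [hH, Subgroup.eq_top_iff']
      intro w
      rw [← inl_left_mul_inr_right w]
      exact Subgroup.mul_mem _ (hbase w.left) (hinr w.right)
    calc Group.rank (WreathProduct Q Δ P) ≤ T.card := Group.rank_le hTcl
      _ ≤ SP.card + ((Finset.univ ×ˢ SQ).card) := by
          refine le_trans (Finset.card_union_le _ _) ?_
          exact Nat.add_le_add Finset.card_image_le Finset.card_image_le
      _ = Group.rank P + Nat.card Ω * Group.rank Q := by
          rw [hSPcard, Finset.card_product, Finset.card_univ, hSQcard,
            Nat.card_eq_fintype_card]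
  -- Lower bound
  have lower : Group.rank P + Nat.card Ω * Group.rank Q ≤ Group.rank (WreathProduct Q Δ P) := by
    set VQ := Q ⧸ pFrat p Q with hVQ
    set VP := P ⧸ pFrat p P with hVP
    -- base homomorphism
    set θ : (Δ → Q) →* (Ω → VQ) :=
      { toFun := fun f ω => ∏ δ : Δ, if (Quotient.mk'' δ : Ω) = ω then
          ((f δ : VQ)) else 1
        map_one' := by
          funext ω
          simp
        map_mul' := by
          intro f g
          funext ω
          rw [Pi.mul_apply]
          rw [← Finset.prod_mul_distrib]
          refine Finset.prod_congr rfl fun δ _ => ?_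
          split_ifs with h
          · rfl
          · rw [one_mul] } with hθ
    have hθinv : ∀ (σ : P) (f : Δ → Q), θ (wreathMulAut Q Δ P σ f) = θ f := by
      intro σ f
      funext ω
      show (∏ δ : Δ, if (Quotient.mk'' δ : Ω) = ω then ((wreathMulAut Q Δ P σ f δ : VQ)) else 1)
        = ∏ δ : Δ, if (Quotient.mk'' δ : Ω) = ω then ((f δ : VQ)) else 1
      refine Fintype.prod_equiv (MulAction.toPerm σ)
        (fun δ => if (Quotient.mk'' δ : Ω) = ω then ((f δ : VQ)) else 1)
        (fun δ => if (Quotient.mk'' δ : Ω) = ω then ((wreathMulAut Q Δ P σ f δ : VQ)) else 1)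
        (fun δ => ?_) |>.symm
      show (if (Quotient.mk'' δ : Ω) = ω then ((f δ : VQ)) else 1) =
        if (Quotient.mk'' (σ • δ) : Ω) = ω then ((wreathMulAut Q Δ P σ f (σ • δ) : VQ)) else 1
      rw [haut, inv_smul_smul, hmksmul]
    have hcomm : ∀ a b : (Ω → VQ) × VP, a * b * a⁻¹ = b := by
      intro a b
      rw [mul_comm a b, mul_assoc, mul_inv_cancel, mul_one]
    set φ : WreathProduct Q Δ P →* (Ω → VQ) × VP :=
      SemidirectProduct.lift ((MonoidHom.inl (Ω → VQ) VP).comp θ)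
        ((MonoidHom.inr (Ω → VQ) VP).comp (QuotientGroup.mk' (pFrat p P)))
        (by
          intro σ
          refine MonoidHom.ext fun f => ?_
          simp only [MonoidHom.coe_comp, Function.comp_apply, MulEquiv.coe_toMonoidHom,
            MulAut.conj_apply]
          rw [hcomm, hθinv]) with hφ
    have hφsurj : Function.Surjective φ := by
      rintro ⟨v, u⟩
      obtain ⟨σ, rfl⟩ := QuotientGroup.mk'_surjective (pFrat p P) u
      have hex : ∀ ω : Ω, ∃ q : Q, ((q : VQ)) = v ω :=
        fun ω => QuotientGroup.mk'_surjective (pFrat p Q) (v ω)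
      choose qf hqf using hex
      refine ⟨⟨fun δ => if δ = (Quotient.mk'' δ : Ω).out then qf (Quotient.mk'' δ) else 1, σ⟩, ?_⟩
      rw [mk_eq_inl_mul_inr, map_mul, lift_inl, lift_inr]
      simp only [MonoidHom.coe_comp, Function.comp_apply, MonoidHom.inl_apply,
        MonoidHom.inr_apply, QuotientGroup.mk'_apply]
      rw [Prod.mk_mul_mk, mul_one, one_mul]
      refine Prod.ext ?_ rfl
      show (fun ω => ∏ δ : Δ, _) = v
      funext ω
      show (∏ δ : Δ, if (Quotient.mk'' δ : Ω) = ω then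
        (((if δ = (Quotient.mk'' δ : Ω).out then qf (Quotient.mk'' δ) else 1 : Q) : VQ)) else 1)
        = v ω
      rw [Finset.prod_eq_single ω.out]
      · rw [if_pos (Quotient.out_eq' ω), if_pos (by rw [Quotient.out_eq' ω]), Quotient.out_eq' ω,
          hqf]
      · intro δ _ hδ
        split_ifs with h1 h2
        · exfalso
          apply hδ
          rw [h1] at h2
          exact h2
        · exact QuotientGroup.mk_one _
        · rfl
      · intro h
        exact absurd (Finset.mem_univ _) h
    -- the target group is elementary abelian of the right order
    have hVQpow : ∀ x : VQ, x ^ p = 1 := pFratQuot_pow_eq_one p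
    have hVPpow : ∀ x : VP, x ^ p = 1 := pFratQuot_pow_eq_one p
    have hTgtpow : ∀ t : (Ω → VQ) × VP, t ^ p = 1 := by
      rintro ⟨f, v⟩
      refine Prod.ext ?_ ?_
      · show f ^ p = 1
        funext ω
        exact hVQpow (f ω)
      · exact hVPpow v
    have hrankTgt := rank_elementary hp ((Ω → VQ) × VP) hTgtpow
    obtain ⟨aQ, haQ⟩ := IsPGroup.iff_card.mp (hQ.to_quotient (pFrat p Q))
    obtain ⟨aP, haP⟩ := IsPGroup.iff_card.mp (hP.to_quotient (pFrat p P))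
    have hcardTgt : Nat.card ((Ω → VQ) × VP) = p ^ (Nat.card Ω * aQ + aP) := by
      rw [Nat.card_prod, Nat.card_fun, haQ, haP, ← pow_mul, ← pow_add, mul_comm aQ]
    have hrankQ : Group.rank Q = aQ := by
      rw [rank_eq_factorization hp hQ, ← hVQ, haQ, hp.factorization_pow, Finsupp.single_eq_same]
    have hrankP : Group.rank P = aP := by
      rw [rank_eq_factorization hp hP, ← hVP, haP, hp.factorization_pow, Finsupp.single_eq_same]
    have : Group.rank ((Ω → VQ) × VP) = Nat.card Ω * aQ + aP := by
      rw [hrankTgt, hcardTgt, hp.factorization_pow, Finsupp.single_eq_same]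
    have hle := Group.rank_le_of_surjective φ hφsurj
    rw [this] at hle
    rw [hrankQ, hrankP]
    omega
  omega

end Main
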